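/- Identify the plane ℝ² with ℂ. Let v ∈ ℂ, ω₀ > 0, k_P > 0, k_I > 0. Let θ, p, ω_I : ℝ → ℝ × ℂ × ℝ be differentiable and satisfy the closed-loop integral-controlled dynamics: θ' = ω₀ + u, p' = e^{iθ} v, ω_I' = u, where u(t) = ω_P(t) − k_I ω_I(t) and ω_P(t) = k_P · Re( e^{−iθ(t)} ( ω₀ (p(t) − p_r(t)) − i e^{iθ_r(t)} ) ), with a reference θ_r' = ω₀, p_r' = e^{iθ_r} whose constant circle center is c_r = p_r + (i/ω₀)e^{iθ_r}. Define the rotating-frame variable x(t) = e^{−iθ(t)} ( c(t) − c_r ), where c(t) = p(t) + (i/ω₀)e^{iθ(t)} v. Then x and ω_I satisfy the reduced system: x'(t) = −(v/ω₀)·u(t) − i·(ω₀ + u(t))·x(t) and ω_I'(t) = u(t), where u(t) = k_P ω₀ Re(x(t)) + k_P Im(v) − k_I ω_I(t). -/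

import Mathlib

open Complex

private lemma expDeriv (θ : ℝ → ℝ) (d : ℝ) (t : ℝ) (h : HasDerivAt θ d t) :
    HasDerivAt (fun s => Complex.exp (θ s * Complex.I))
      (Complex.exp (θ t * Complex.I) * (d * Complex.I)) t := by
  have := ((h.ofReal_comp).mul_const Complex.I).cexp
  simpa using this

/-- rotating-frame reduction of the steering-controlled vehicle
under the adapted integral controller (proof of Proposition 4). -/
theorem rotating_frame_reduction
    (v : ℂ) (ω₀ kP kI : ℝ) (hω₀ : 0 < ω₀) (hkP : 0 < kP) (hkI : 0 < kI)
    (θ θr : ℝ → ℝ) (p pr : ℝ → ℂ) (ωI : ℝ → ℝ)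
    (ωP u : ℝ → ℝ)
    (hωP : ∀ t, ωP t = kP * (Complex.exp (-θ t * Complex.I) *
        (ω₀ * (p t - pr t) - Complex.I * Complex.exp (θr t * Complex.I))).re)
    (hu : ∀ t, u t = ωP t - kI * ωI t)
    (hθr : ∀ t, HasDerivAt θr ω₀ t)
    (hpr : ∀ t, HasDerivAt pr (Complex.exp (θr t * Complex.I)) t)
    (hθ : ∀ t, HasDerivAt θ (ω₀ + u t) t)
    (hp : ∀ t, HasDerivAt p (Complex.exp (θ t * Complex.I) * v) t)
    (hωI : ∀ t, HasDerivAt ωI (u t) t)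
    (c cr : ℝ → ℂ)
    (hc : ∀ t, c t = p t + (Complex.I / ω₀) * Complex.exp (θ t * Complex.I) * v)
    (hcr : ∀ t, cr t = pr t + (Complex.I / ω₀) * Complex.exp (θr t * Complex.I))
    (x : ℝ → ℂ)
    (hx : ∀ t, x t = Complex.exp (-θ t * Complex.I) * (c t - cr t)) :
    ∀ t, HasDerivAt x (-(v / ω₀) * u t - Complex.I * (ω₀ + u t) * x t) t ∧
      u t = kP * ω₀ * (x t).re + kP * v.im - kI * ωI t := by
  have hω₀' : (ω₀ : ℂ) ≠ 0 := by exact_mod_cast hω₀.ne'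
  intro t
  have hcfun : c = fun s => p s + (Complex.I / ω₀) * Complex.exp (θ s * Complex.I) * v :=
    funext hc
  have hcrfun : cr = fun s => pr s + (Complex.I / ω₀) * Complex.exp (θr s * Complex.I) :=
    funext hcr
  have hxfun : x = fun s => Complex.exp (-θ s * Complex.I) * (c s - cr s) := funext hx
  -- derivative of c
  have hcD : HasDerivAt c (Complex.exp (θ t * Complex.I) * v * (-(u t) / ω₀)) t := by
    rw [hcfun]
    have := (hp t).add ((((expDeriv θ (ω₀ + u t) t (hθ t)).const_mul
      ((Complex.I : ℂ) / ω₀)).mul_const v))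
    simp only [Pi.add_def] at this
    refine HasDerivAt.congr_deriv this ?_
    push_cast
    field_simp
    linear_combination (-(Complex.exp (θ t * Complex.I) * ((ω₀ : ℂ) + u t) * v) * ω₀ + v * (ω₀ + ω₀ * Complex.exp (θ t * Complex.I) * u t + ω₀ ^ 2 * Complex.exp (θ t * Complex.I) + u t)) * Complex.I_sq
  -- derivative of cr : zero
  have hcrD : HasDerivAt cr 0 t := by
    rw [hcrfun]
    have := (hpr t).add (((expDeriv θr ω₀ t (hθr t)).const_mul ((Complex.I : ℂ) / ω₀)))
    simp only [Pi.add_def] at this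
    refine HasDerivAt.congr_deriv this ?_
    field_simp
    linear_combination (-(Complex.exp (θr t * Complex.I)) * (ω₀ : ℂ) + Complex.exp (θr t * Complex.I) * (1 + ω₀)) * Complex.I_sq
  -- derivative of exp(-θ I)
  have hED : HasDerivAt (fun s => Complex.exp (-θ s * Complex.I))
      (Complex.exp (-θ t * Complex.I) * (-(ω₀ + u t) * Complex.I)) t := by
    have := expDeriv (fun s => -θ s) (-(ω₀ + u t)) t (hθ t).neg
    simpa using this
  have hE1 : Complex.exp (-((θ t : ℂ) * Complex.I)) * Complex.exp ((θ t : ℂ) * Complex.I) = 1 := by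
    rw [← Complex.exp_add]; simp
  constructor
  · have hD := hED.mul (hcD.sub hcrD)
    rw [show (fun s => Complex.exp (-θ s * Complex.I)) * (c - cr) = x from by rw [hxfun]; rfl] at hD
    refine HasDerivAt.congr_deriv hD ?_
    rw [hx t]
    field_simp
    simp only [Pi.sub_apply]
    linear_combination (-(v * (u t : ℂ))) * hE1
  · -- algebraic identity for u
    have key : (ω₀ : ℂ) * x t =
        Complex.exp (-θ t * Complex.I) *
          (ω₀ * (p t - pr t) - Complex.I * Complex.exp (θr t * Complex.I)) + Complex.I * v := by
      rw [hx t, hc t, hcr t]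
      field_simp
      linear_combination (Complex.I * v) * hE1
    have hre : ω₀ * (x t).re =
        (Complex.exp (-θ t * Complex.I) *
          (ω₀ * (p t - pr t) - Complex.I * Complex.exp (θr t * Complex.I))).re - v.im := by
      have := congrArg Complex.re key
      simp [Complex.add_re, Complex.mul_re] at this ⊢
      linarith
    rw [hu t, hωP t]
    linear_combination (-kP) * hre
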